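/- Let m ≥ 1 be an odd integer, a = m²+1, k ≥ 1 an integer, and q = 2ak+m an odd prime power; set n = (q²+1)/a and s = (n−1)/2. Fix an integer α with 1 ≤ α ≤ k, set δ = αq+mk, and let Z = C_{s+1} ∪ C_{s+2} ∪ ... ∪ C_{s+δ} ⊆ Z/nZ. Let λ be a primitive n-th root of unity in an extension field of F_{q²} (such λ exists in F_{q⁴} since n divides q⁴−1), and let C = {(c₀, ..., c_{n−1}) ∈ (F_{q²})ⁿ : Σ_{j=0}^{n−1} c_j λ^{ij} = 0 for all i ∈ Z}. Then C is an MDS code with parameters [n, n−2δ, 2δ+1]: its dimension over F_{q²} is n−2δ and its minimum Hamming distance is exactly 2δ+1. -/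

import Mathlib

open Polynomial Finset

lemma coeff_sum_range {R : Type*} [CommRing R] (n : ℕ) (v : ℕ → R) (j : ℕ) :
    (∑ i ∈ Finset.range n, C (v i) * X ^ i).coeff j = if j < n then v j else 0 := by
  rw [finset_sum_coeff]
  simp only [coeff_C_mul, coeff_X_pow, mul_ite, mul_one, mul_zero]
  rw [Finset.sum_ite_eq (Finset.range n) j (fun i => v i)]
  simp [Finset.mem_range]

lemma natDegree_sum_range_lt {R : Type*} [CommRing R] (n : ℕ) (hn : 0 < n) (v : ℕ → R) :
    (∑ i ∈ Finset.range n, C (v i) * X ^ i).natDegree < n := by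
  have : (∑ i ∈ Finset.range n, C (v i) * X ^ i).natDegree ≤ n - 1 := by
    apply Polynomial.natDegree_sum_le_of_forall_le
    intro i hi
    refine le_trans (Polynomial.natDegree_C_mul_le _ _) (le_trans (natDegree_X_pow_le i) ?_)
    exact Nat.le_sub_one_of_lt (Finset.mem_range.1 hi)
  omega

lemma poly_eq_sum_range {R : Type*} [CommRing R] {n : ℕ} {p : R[X]} (h : p.natDegree < n) :
    p = ∑ i ∈ Finset.range n, C (p.coeff i) * X ^ i := by
  simp only [C_mul_X_pow_eq_monomial]
  exact p.as_sum_range' n h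

lemma vandermonde_zero {K : Type*} [Field K] {w b : ℕ} (x v : Fin w → K)
    (hx : Function.Injective x) (hx0 : ∀ r, x r ≠ 0)
    (heq : ∀ t : Fin w, ∑ r, v r * x r ^ (b + (t : ℕ)) = 0) : v = 0 := by
  classical
  set M : Matrix (Fin w) (Fin w) K := Matrix.of fun t r => x r ^ (b + (t : ℕ)) with hM
  have hdet : M.det ≠ 0 := by
    have h1 : M = Matrix.of (fun t r => x r ^ b * (Matrix.vandermonde x).transpose t r) := by
      ext t r
      simp [hM, Matrix.vandermonde, Matrix.transpose, pow_add]
    rw [h1, Matrix.det_mul_row (fun r => x r ^ b) (Matrix.vandermonde x).transpose]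
    apply mul_ne_zero
    · exact Finset.prod_ne_zero_iff.2 fun r _ => pow_ne_zero _ (hx0 r)
    · rw [Matrix.det_transpose, Matrix.det_vandermonde]
      refine Finset.prod_ne_zero_iff.2 fun i _ => Finset.prod_ne_zero_iff.2 fun j hj => ?_
      have hij : i ≠ j := (Finset.mem_Ioi.1 hj).ne
      exact sub_ne_zero_of_ne fun hc => hij (hx hc).symm
  have hmv : M.mulVec v = 0 := by
    ext t
    simpa [Matrix.mulVec, dotProduct, hM, mul_comm] using heq t
  exact Matrix.eq_zero_of_mulVec_eq_zero hdet hmv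

lemma mem_range_algebraMap_of_pow {F E : Type*} [Field F] [Fintype F] [DecidableEq E]
    [Field E] [Algebra F E] {x : E} (hx : x ^ Fintype.card F = x) :
    x ∈ Set.range (algebraMap F E) := by
  classical
  set Q := Fintype.card F with hQ
  have hQ2 : 2 ≤ Q := Fintype.one_lt_card
  set f : E[X] := X ^ Q - X with hf
  have hfne : f ≠ 0 := by
    intro h
    have : f.coeff Q = (0 : E) := by rw [h]; simp
    rw [hf] at this
    simp only [coeff_sub, coeff_X_pow, Polynomial.coeff_X, if_pos rfl] at this
    rw [if_neg (by omega : ¬ (1 = Q))] at this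
    simp at this
  have hdeg : f.natDegree ≤ Q := by
    refine le_trans (natDegree_sub_le _ _) ?_
    simp [natDegree_X_pow_le, natDegree_X_le]
    omega
  set T : Finset E := f.roots.toFinset with hT
  have hTcard : T.card ≤ Q := le_trans (Multiset.toFinset_card_le _)
    (le_trans (Polynomial.card_roots' f) hdeg)
  set img : Finset E := Finset.univ.image (algebraMap F E) with himg
  have hinj : Function.Injective (algebraMap F E) := (algebraMap F E).injective
  have himgcard : img.card = Q := by
    rw [himg, Finset.card_image_of_injective _ hinj, Finset.card_univ]
  have hsub : img ⊆ T := by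
    intro y hy
    rw [himg, Finset.mem_image] at hy
    obtain ⟨z, _, rfl⟩ := hy
    rw [hT, Multiset.mem_toFinset, Polynomial.mem_roots hfne]
    show f.IsRoot _
    rw [Polynomial.IsRoot, hf]
    simp only [eval_sub, eval_pow, eval_X]
    rw [← map_pow, FiniteField.pow_card, sub_self]
  have : T = img := (Finset.eq_of_subset_of_card_le hsub (by omega)).symm
  have hxT : x ∈ T := by
    rw [hT, Multiset.mem_toFinset, Polynomial.mem_roots hfne]
    show f.IsRoot x
    rw [Polynomial.IsRoot, hf]; simp [hx]
  rw [this, himg, Finset.mem_image] at hxT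
  obtain ⟨z, _, rfl⟩ := hxT
  exact ⟨z, rfl⟩

lemma prod_X_sub_C_dvd_of_roots {K : Type*} [Field K] {ι : Type*} [DecidableEq ι]
    (s : Finset ι) (r : ι → K)
    (hinj : Set.InjOn r s) (p : K[X]) (hroots : ∀ i ∈ s, p.eval (r i) = 0) :
    (∏ i ∈ s, (X - C (r i))) ∣ p := by
  refine Finset.prod_dvd_of_coprime ?_ fun i hi => ?_
  · intro i hi j hj hij
    exact Polynomial.isCoprime_X_sub_C_of_isUnit_sub
      (sub_ne_zero_of_ne fun hc => hij (hinj hi hj hc)).isUnit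
  · rw [Polynomial.dvd_iff_isRoot]; exact hroots i hi

/-- Case I, q = 2ak+m: the cyclic code over F_{q²} of length n = (q²+1)/a with
defining set Z = C_{s+1} ∪ ⋯ ∪ C_{s+δ} is an MDS code with parameters
[n, n−2δ, 2δ+1]: it is an F-subspace of dimension n−2δ, every nonzero codeword has
Hamming weight at least 2δ+1, and some nonzero codeword has Hamming weight exactly 2δ+1. -/
theorem mds_cyclic_code_case_I
    (m a k q n s α δ : ℕ)
    (hm1 : 1 ≤ m) (hmodd : Odd m)
    (ha : a = m ^ 2 + 1)
    (hk : 1 ≤ k)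
    (hq : q = 2 * a * k + m)
    (hqodd : Odd q) (hqpp : IsPrimePow q)
    (hn : n = (q ^ 2 + 1) / a)
    (hs : s = (n - 1) / 2)
    (hα1 : 1 ≤ α) (hαk : α ≤ k)
    (hδ : δ = α * q + m * k)
    (F : Type*) [Field F] [Fintype F] [DecidableEq F]
    (hF : Fintype.card F = q ^ 2)
    (E : Type*) [Field E] [Algebra F E]
    (lam : E) (hlam : IsPrimitiveRoot lam n)
    (Z : Set (ZMod n))
    (hZ : Z = {x : ZMod n | ∃ i : ℕ, 1 ≤ i ∧ i ≤ δ ∧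
      (x = ((s + i : ℕ) : ZMod n) ∨ x = -((s + i : ℕ) : ZMod n))})
    (C : Set (Fin n → F))
    (hC : C = {c : Fin n → F | ∀ i : ZMod n, i ∈ Z →
      ∑ j : Fin n, algebraMap F E (c j) * lam ^ (i.val * (j : ℕ)) = 0}) :
    (∃ W : Submodule F (Fin n → F), (W : Set (Fin n → F)) = C ∧
      Module.finrank F W = n - 2 * δ) ∧
    (∀ c ∈ C, c ≠ 0 → 2 * δ + 1 ≤ hammingNorm c) ∧
    (∃ c ∈ C, c ≠ 0 ∧ hammingNorm c = 2 * δ + 1) := by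
  classical
  -- ARITHMETIC
  have ha0 : 0 < a := by rw [ha]; positivity
  have hqa : q ^ 2 + 1 = a * (4 * a * k ^ 2 + 4 * k * m + 1) := by rw [hq, ha]; ring
  have hn' : n = 4 * a * k ^ 2 + 4 * k * m + 1 := by rw [hn, hqa, Nat.mul_div_cancel_left _ ha0]
  have hak : 1 ≤ a * k ^ 2 := Nat.one_le_iff_ne_zero.2 (by positivity)
  have hns0 : n = 2 * (2 * a * k ^ 2 + 2 * k * m) + 1 := by rw [hn']; ring
  have hs' : s = 2 * a * k ^ 2 + 2 * k * m := by rw [hs, hns0]; omega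
  have hns : n = 2 * s + 1 := by rw [hs']; exact hns0
  obtain ⟨b, hb⟩ := Nat.le.dest hαk
  have hδs : δ + b * q = s := by rw [hδ, hs', hq, ← hb]; ring
  have hq1 : 1 ≤ q := le_trans hm1 (hq ▸ Nat.le_add_left m _)
  have hδ1 : 1 ≤ δ := by
    rw [hδ]
    exact le_trans (by simpa using Nat.mul_le_mul hα1 hq1) (Nat.le_add_right _ _)
  set d : ℕ := b * q with hd
  have hsd : s = δ + d := hδs.symm
  have h2δn : 2 * δ < n := by omega
  have hn0 : 0 < n := by omega
  haveI : NeZero n := ⟨by omega⟩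
  have hlamn : lam ^ n = 1 := hlam.pow_eq_one
  have hlam0 : lam ≠ 0 := hlam.ne_zero (by omega)
  have hinjF : Function.Injective (algebraMap F E) := (algebraMap F E).injective
  have hqsq : q ^ 2 + 1 = a * n := by rw [hn']; exact hqa
  -- cancellation helper
  have hlam_inv : ∀ u u' : ℕ, u + u' = n → lam ^ u * lam ^ u' = 1 := by
    intro u u' huu; rw [← pow_add, huu, hlamn]
  -- Z characterization
  have hval : ∀ t : ℕ, t < 2 * δ → ((d + 1 + t : ℕ) : ZMod n).val = d + 1 + t := by
    intro t ht; exact ZMod.val_natCast_of_lt (by omega)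
  have hZ' : ∀ x : ZMod n, x ∈ Z ↔ ∃ t : ℕ, t < 2 * δ ∧ x = ((d + 1 + t : ℕ) : ZMod n) := by
    have hneg : ∀ u u' : ℕ, u + u' = n → ((u : ZMod n) = -(u' : ZMod n)) := by
      intro u u' huu
      have : ((u : ZMod n)) + (u' : ZMod n) = 0 := by
        rw [← Nat.cast_add, huu, ZMod.natCast_self]
      exact eq_neg_of_add_eq_zero_left this
    intro x
    rw [hZ]
    constructor
    · rintro ⟨i, hi1, hiδ, hx | hx⟩
      · exact ⟨δ + i - 1, by omega, by rw [hx]; congr 1; omega⟩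
      · refine ⟨δ - i, by omega, ?_⟩
        rw [hx, ← hneg (d + 1 + (δ - i)) (s + i) (by omega)]
    · rintro ⟨t, ht, hx⟩
      by_cases hc : δ ≤ t
      · exact ⟨t + 1 - δ, by omega, by omega, Or.inl (by rw [hx]; congr 1; omega)⟩
      · refine ⟨δ - t, by omega, by omega, Or.inr ?_⟩
        rw [hx, ← hneg (d + 1 + t) (s + (δ - t)) (by omega)]
  -- the polynomial g over E
  set g : Polynomial E := ∏ t ∈ Finset.range (2 * δ), (X - Polynomial.C (lam ^ (d + 1 + t)))
    with hgdef
  have hrootinj : Set.InjOn (fun t : ℕ => lam ^ (d + 1 + t)) (Finset.range (2 * δ)) := by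
    intro t ht t' ht' hc
    simp only [Finset.coe_range, Set.mem_Iio] at ht ht'
    have := hlam.pow_inj (by omega : d + 1 + t < n) (by omega : d + 1 + t' < n) hc
    omega
  have hgmonic : g.Monic := monic_prod_of_monic _ _ fun t _ => monic_X_sub_C _
  have hgdeg : g.natDegree = 2 * δ := by
    rw [hgdef, natDegree_prod_of_monic _ _ fun t _ => monic_X_sub_C _]
    simp only [natDegree_X_sub_C, Finset.sum_const, Finset.card_range, smul_eq_mul, mul_one]
  -- Frobenius fixes g
  have hgcoeff : ∀ j : ℕ, g.coeff j ∈ Set.range (algebraMap F E) := by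
    -- characteristic setup
    obtain ⟨p, e, hp, he, hpe⟩ := hqpp
    have hpp : p.Prime := Nat.prime_iff.2 hp
    haveI : Fact p.Prime := ⟨hpp⟩
    have hcardF : Fintype.card F = p ^ (2 * e) := by rw [hF, ← hpe]; ring
    haveI hchF : CharP F p := by
      set r := ringChar F with hr
      haveI : CharP F r := ringChar.charP F
      obtain ⟨jj, hrp, hcard⟩ := FiniteField.card F r
      have hrdvd : r ∣ p ^ (2 * e) := by
        rw [← hcardF, hcard]
        exact dvd_pow_self r (by positivity)
      have : r = p :=
        (Nat.prime_dvd_prime_iff_eq hrp hpp).1 (Nat.Prime.dvd_of_dvd_pow hrp hrdvd)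
      rwa [this] at ‹CharP F r›
    haveI : CharP E p := charP_of_injective_algebraMap hinjF p
    haveI : ExpChar E p := ExpChar.prime hpp
    set φ : E →+* E := iterateFrobenius E p (2 * e) with hφdef
    have hφ : ∀ x : E, φ x = x ^ q ^ 2 := by
      intro x
      rw [hφdef, iterateFrobenius_def]
      congr 1
      rw [← hpe]; ring
    -- the map fixes g
    have hgmap : g.map φ = g := by
      rw [hgdef, Polynomial.map_prod]
      simp only [Polynomial.map_sub, map_X, map_C]
      conv_rhs => rw [← Finset.prod_range_reflect]
      refine Finset.prod_congr rfl fun t ht => ?_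
      rw [Finset.mem_range] at ht
      congr 1
      congr 1
      rw [hφ, ← pow_mul]
      have hA : (d + 1 + t) * q ^ 2 + (d + 1 + t) = n * ((d + 1 + t) * a) := by
        calc (d + 1 + t) * q ^ 2 + (d + 1 + t) = (d + 1 + t) * (q ^ 2 + 1) := by ring
          _ = (d + 1 + t) * (a * n) := by rw [hqsq]
          _ = n * ((d + 1 + t) * a) := by ring
      have h1 : lam ^ ((d + 1 + t) * q ^ 2) * lam ^ (d + 1 + t) = 1 := by
        rw [← pow_add, hA, pow_mul, hlamn, one_pow]
      have h2 : lam ^ (d + 1 + (2 * δ - 1 - t)) * lam ^ (d + 1 + t) = 1 :=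
        hlam_inv _ _ (by omega)
      have hne : lam ^ (d + 1 + t) ≠ 0 := pow_ne_zero _ hlam0
      exact mul_right_cancel₀ hne (h1.trans h2.symm)
    intro j
    apply mem_range_algebraMap_of_pow
    rw [hF]
    have := congrArg (fun pp : Polynomial E => pp.coeff j) hgmap
    simpa [Polynomial.coeff_map, hφ] using this
  obtain ⟨G, hG⟩ := (Polynomial.mem_lifts g).1 ((Polynomial.lifts_iff_coeff_lifts g).2 hgcoeff)
  have hGmonic : G.Monic := Polynomial.monic_of_injective hinjF (by rw [hG]; exact hgmonic)
  have hGdeg : G.natDegree = 2 * δ := by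
    rw [← natDegree_map_eq_of_injective hinjF, hG, hgdeg]
  have hGne : G ≠ 0 := hGmonic.ne_zero
  -- vector to polynomial
  set vext : (Fin n → F) → ℕ → F := fun c j => if h : j < n then c ⟨j, h⟩ else 0 with hvext
  set pc : (Fin n → F) → Polynomial F :=
    fun c => ∑ j ∈ Finset.range n, Polynomial.C (vext c j) * X ^ j with hpc
  have hpccoeff : ∀ (c : Fin n → F) (j : Fin n), (pc c).coeff (j : ℕ) = c j := by
    intro c j
    rw [hpc, coeff_sum_range, if_pos j.isLt, hvext]
    simp
  have hpcdeg : ∀ c : Fin n → F, (pc c).natDegree < n := fun c =>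
    natDegree_sum_range_lt n hn0 _
  -- characterization of membership
  have heval : ∀ (c : Fin n → F) (u : ℕ), ((pc c).map (algebraMap F E)).eval (lam ^ u) =
      ∑ j : Fin n, algebraMap F E (c j) * lam ^ (u * (j : ℕ)) := by
    intro c u
    rw [hpc, Polynomial.map_sum]
    simp only [Polynomial.map_mul, map_C, Polynomial.map_pow, map_X]
    rw [Polynomial.eval_finset_sum]
    simp only [eval_mul, eval_C, eval_pow, eval_X]
    rw [← Fin.sum_univ_eq_sum_range (fun j => algebraMap F E (vext c j) * (lam ^ u) ^ j) n]
    refine Finset.sum_congr rfl fun j _ => ?_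
    rw [hvext]
    simp only [j.isLt, dif_pos]
    rw [← pow_mul]
  have hchar : ∀ c : Fin n → F, c ∈ C ↔ G ∣ pc c := by
    intro c
    have hmapdvd := Polynomial.map_dvd_map (algebraMap F E) hinjF hGmonic (y := pc c)
    constructor
    · intro hcC
      rw [hC] at hcC
      simp only [Set.mem_setOf_eq] at hcC
      refine hmapdvd.mp ?_
      rw [hG, hgdef]
      apply prod_X_sub_C_dvd_of_roots _ _ hrootinj
      intro t ht
      rw [Finset.mem_range] at ht
      have hiZ : ((d + 1 + t : ℕ) : ZMod n) ∈ Z := (hZ' _).2 ⟨t, ht, rfl⟩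
      have h0 := hcC _ hiZ
      rw [hval t ht] at h0
      rw [heval c (d + 1 + t)]
      exact h0
    · intro hdvd
      rw [hC]
      simp only [Set.mem_setOf_eq]
      intro i hiZ
      obtain ⟨t, ht, rfl⟩ := (hZ' i).1 hiZ
      rw [hval t ht, ← heval c (d + 1 + t)]
      have hdvd2 : g ∣ (pc c).map (algebraMap F E) := by
        rw [← hG]
        exact Polynomial.map_dvd _ hdvd
      obtain ⟨R, hR⟩ := hdvd2
      rw [hR, eval_mul]
      have hg0 : g.eval (lam ^ (d + 1 + t)) = 0 := by
        rw [hgdef, eval_prod]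
        apply Finset.prod_eq_zero (Finset.mem_range.2 ht)
        simp
      rw [hg0, zero_mul]
  have hBCH : ∀ c ∈ C, c ≠ 0 → 2 * δ + 1 ≤ hammingNorm c := by
    intro c hcC hc0
    by_contra hlt
    push_neg at hlt
    set S : Finset (Fin n) := Finset.univ.filter (fun j => c j ≠ 0) with hS
    have hnorm : hammingNorm c = S.card := rfl
    have hw : S.card ≤ 2 * δ := by omega
    set w := S.card with hwdef
    set jj : Fin w → Fin n := fun r => (S.equivFin.symm r : Fin n) with hjj
    set xx : Fin w → E := fun r => lam ^ ((jj r : Fin n) : ℕ) with hxx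
    set vv : Fin w → E := fun r => algebraMap F E (c (jj r)) with hvv
    have hxinj : Function.Injective xx := by
      intro r r' hrr
      have h1 : ((jj r : Fin n) : ℕ) = ((jj r' : Fin n) : ℕ) :=
        hlam.pow_inj (jj r).isLt (jj r').isLt hrr
      exact S.equivFin.symm.injective (Subtype.ext (Fin.ext h1))
    have hx0 : ∀ r, xx r ≠ 0 := fun r => pow_ne_zero _ hlam0
    have heqs : ∀ t : Fin w, ∑ r, vv r * xx r ^ ((d + 1) + (t : ℕ)) = 0 := by
      intro t
      have ht2 : (t : ℕ) < 2 * δ := lt_of_lt_of_le t.isLt hw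
      have hiZ : ((d + 1 + (t : ℕ) : ℕ) : ZMod n) ∈ Z := (hZ' _).2 ⟨t, ht2, rfl⟩
      rw [hC] at hcC
      have h0 := hcC _ hiZ
      rw [hval _ ht2] at h0
      have hres : ∑ j ∈ S, algebraMap F E (c j) * lam ^ ((d + 1 + (t : ℕ)) * (j : ℕ)) = 0 := by
        rw [← h0]
        exact Finset.sum_subset (Finset.subset_univ S) (fun j _ hj => by
          simp only [hS, Finset.mem_filter, Finset.mem_univ, true_and, not_not] at hj
          simp [hj])
      calc ∑ r : Fin w, vv r * xx r ^ ((d + 1) + (t : ℕ))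
          = ∑ j ∈ S, algebraMap F E (c j) * lam ^ ((d + 1 + (t : ℕ)) * (j : ℕ)) := by
            rw [← Finset.sum_coe_sort S
              (fun j => algebraMap F E (c j) * lam ^ ((d + 1 + (t : ℕ)) * (j : ℕ)))]
            rw [← Equiv.sum_comp S.equivFin.symm
              (fun j : S => algebraMap F E (c (j : Fin n)) *
                lam ^ ((d + 1 + (t : ℕ)) * ((j : Fin n) : ℕ)))]
            refine Finset.sum_congr rfl fun r _ => ?_
            rw [hvv, hxx, ← pow_mul, mul_comm (((jj r : Fin n) : ℕ)) _]
        _ = 0 := hres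
    have hvz := vandermonde_zero xx vv hxinj hx0 heqs
    obtain ⟨j0, hj0⟩ : ∃ j, c j ≠ 0 := by
      by_contra hall
      push_neg at hall
      exact hc0 (funext hall)
    have hj0S : j0 ∈ S := by simp [hS, hj0]
    have hv0 : vv (S.equivFin ⟨j0, hj0S⟩) = 0 := by rw [hvz]; rfl
    rw [hvv] at hv0
    simp only [hjj, Equiv.symm_apply_apply] at hv0
    rw [← map_zero (algebraMap F E)] at hv0
    exact hj0 (hinjF hv0)
  refine ⟨?_, ?_, ?_⟩
  · -- dimension
    set Lm : ZMod n → ((Fin n → F) →ₗ[F] E) := fun i =>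
      { toFun := fun c => ∑ j : Fin n, algebraMap F E (c j) * lam ^ (i.val * (j : ℕ))
        map_add' := by
          intro c1 c2
          simp only [Pi.add_apply, map_add, add_mul]
          rw [Finset.sum_add_distrib]
        map_smul' := by
          intro x c1
          simp only [Pi.smul_apply, smul_eq_mul, map_mul, RingHom.id_apply, Algebra.smul_def,
            Finset.mul_sum, mul_assoc] } with hLm
    set W : Submodule F (Fin n → F) := ⨅ i ∈ Z, LinearMap.ker (Lm i) with hW
    have hWC : (W : Set (Fin n → F)) = C := by
      ext c
      rw [hC]
      simp only [SetLike.mem_coe, hW, Submodule.mem_iInf, LinearMap.mem_ker, Set.mem_setOf_eq,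
        hLm, LinearMap.coe_mk, AddHom.coe_mk]
    have hWmem : ∀ c : Fin n → F, c ∈ W ↔ G ∣ pc c := fun c =>
      Iff.trans (by exact Set.ext_iff.1 hWC c) (hchar c)
    have hdegmul : ∀ h : Polynomial F, h ∈ Polynomial.degreeLT F (n - 2 * δ) →
        (G * h).natDegree < n := by
      intro h hh
      rcases eq_or_ne h 0 with rfl | hne
      · simpa using hn0
      · rw [Polynomial.natDegree_mul hGne hne, hGdeg]
        have h2 : h.natDegree < n - 2 * δ :=
          (Polynomial.natDegree_lt_iff_degree_lt hne).2 (Polynomial.mem_degreeLT.1 hh)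
        omega
    set T : Polynomial.degreeLT F (n - 2 * δ) →ₗ[F] (Fin n → F) :=
      { toFun := fun h => fun j => (G * h.1).coeff (j : ℕ)
        map_add' := by
          intro h1 h2
          funext j
          simp [mul_add, Polynomial.coeff_add]
        map_smul' := by
          intro x h1
          funext j
          simp [mul_smul_comm, Polynomial.coeff_smul, smul_eq_mul] } with hT
    have hpcT : ∀ h : Polynomial F, (hh : h ∈ Polynomial.degreeLT F (n - 2 * δ)) →
        pc (fun j : Fin n => (G * h).coeff (j : ℕ)) = G * h := by
      intro h hh
      rw [hpc]
      conv_rhs => rw [poly_eq_sum_range (hdegmul h hh)]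
      refine Finset.sum_congr rfl fun j hj => ?_
      rw [Finset.mem_range] at hj
      rw [hvext]
      simp only [hj, dif_pos]
    have hTmem : ∀ h : Polynomial.degreeLT F (n - 2 * δ), T h ∈ W := by
      intro h
      rw [hWmem]
      show G ∣ pc (fun j : Fin n => (G * h.1).coeff (j : ℕ))
      rw [hpcT h.1 h.2]
      exact dvd_mul_right _ _
    set Tc : Polynomial.degreeLT F (n - 2 * δ) →ₗ[F] W := T.codRestrict W hTmem with hTc
    have hinj : Function.Injective Tc := by
      intro h1 h2 heq
      apply Subtype.ext
      have heq2 : T h1 = T h2 := congrArg Subtype.val heq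
      have hGeq : G * h1.1 = G * h2.1 := by
        have heq3 : (fun j : Fin n => (G * h1.1).coeff (j : ℕ)) =
            (fun j : Fin n => (G * h2.1).coeff (j : ℕ)) := heq2
        exact (hpcT h1.1 h1.2).symm.trans ((congrArg pc heq3).trans (hpcT h2.1 h2.2))
      exact mul_left_cancel₀ hGne hGeq
    have hsurj : Function.Surjective Tc := by
      rintro ⟨c, hcW⟩
      obtain ⟨h, hh⟩ := (hWmem c).1 hcW
      have hhdeg : h ∈ Polynomial.degreeLT F (n - 2 * δ) := by
        rw [Polynomial.mem_degreeLT]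
        rcases eq_or_ne h 0 with rfl | hne
        · rw [Polynomial.degree_zero]
          exact WithBot.bot_lt_coe _
        · rw [← Polynomial.natDegree_lt_iff_degree_lt hne]
          have h1 : (pc c).natDegree < n := hpcdeg c
          rw [hh, Polynomial.natDegree_mul hGne hne, hGdeg] at h1
          omega
      refine ⟨⟨h, hhdeg⟩, ?_⟩
      apply Subtype.ext
      show T ⟨h, hhdeg⟩ = c
      funext j
      show (G * h).coeff (j : ℕ) = c j
      rw [← hh, hpccoeff]
    refine ⟨W, hWC, ?_⟩
    have e1 : Polynomial.degreeLT F (n - 2 * δ) ≃ₗ[F] W :=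
      LinearEquiv.ofBijective Tc ⟨hinj, hsurj⟩
    rw [← e1.finrank_eq, (Polynomial.degreeLTEquiv F (n - 2 * δ)).finrank_eq]
    simp [Module.finrank_pi]
  · -- BCH bound
    exact hBCH
  · -- minimum weight codeword
    set c0 : Fin n → F := fun j => G.coeff ((j : Fin n) : ℕ) with hc0def
    have hpcc0 : pc c0 = G := by
      rw [hpc]
      conv_rhs => rw [poly_eq_sum_range (show G.natDegree < n by omega)]
      refine Finset.sum_congr rfl fun j hj => ?_
      rw [Finset.mem_range] at hj
      rw [hvext]
      simp only [hj, dif_pos]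
      rfl
    have hc0C : c0 ∈ C := (hchar c0).2 (by rw [hpcc0])
    have hc0ne : c0 ≠ 0 := by
      intro hzero
      have h1 : G.coeff (2 * δ) = 0 := by
        have h2 := congrFun hzero ⟨2 * δ, h2δn⟩
        simpa [hc0def] using h2
      rw [← hGdeg, hGmonic.coeff_natDegree] at h1
      exact one_ne_zero h1
    have hle : hammingNorm c0 ≤ 2 * δ + 1 := by
      have hcard : (Finset.univ.filter (fun j : Fin n => c0 j ≠ 0)).card ≤ 2 * δ + 1 := by
        calc (Finset.univ.filter (fun j : Fin n => c0 j ≠ 0)).card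
            = ((Finset.univ.filter (fun j : Fin n => c0 j ≠ 0)).image Fin.val).card :=
              (Finset.card_image_of_injective _ Fin.val_injective).symm
          _ ≤ (Finset.range (2 * δ + 1)).card := by
              apply Finset.card_le_card
              intro u hu
              simp only [Finset.mem_image, Finset.mem_filter, Finset.mem_univ, true_and] at hu
              obtain ⟨j, hj, rfl⟩ := hu
              rw [Finset.mem_range]
              have hd2 := Polynomial.le_natDegree_of_ne_zero hj
              omega
          _ = 2 * δ + 1 := Finset.card_range _
      exact hcard
    exact ⟨c0, hc0C, hc0ne, le_antisymm hle (hBCH c0 hc0C hc0ne)⟩
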